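/- For λ, μ > −1 and k ≠ l natural numbers, the polynomials C^{(k)}_{λ,μ} and C^{(l)}_{λ,μ} defined by C^{(k)}_{λ,μ}(v) = c^{(k)}_{λ,μ}((1−v)/2,(1+v)/2) (with c^{(k)}_{λ,μ} as in the Rodrigues-type formula in one variable) satisfy ∫_{−1}^{1} C^{(k)}_{λ,μ}(v) C^{(l)}_{λ,μ}(v) (1−v)^λ (1+v)^μ dv = 0. -/

import Mathlib

open Finset

/-- The operator `D = ∂/∂x − ∂/∂y` on real functions of two real variables. -/
noncomputable def Dop (F : ℝ → ℝ → ℝ) : ℝ → ℝ → ℝ :=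
  fun x y => deriv (fun x' => F x' y) x - deriv (fun y' => F x y') y

/-- One-variable Rodrigues-type function `c_{λ,μ}^{(k)}(x,y)` for `x, y > 0`. -/
noncomputable def cRC (l m : ℝ) (k : ℕ) (x y : ℝ) : ℝ :=
  x ^ (-l) * y ^ (-m) * (Dop^[k] (fun x' y' => x' ^ (l + k) * y' ^ (m + k))) x y

/-- `C^{(k)}_{λ,μ}(v) = c^{(k)}_{λ,μ}((1−v)/2,(1+v)/2)`. -/
noncomputable def CRC (l m : ℝ) (k : ℕ) (v : ℝ) : ℝ :=
  cRC l m k ((1 - v) / 2) ((1 + v) / 2)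

namespace CRCaux

open MeasureTheory Filter

/-- Falling-factorial type product `a (a-1) ⋯ (a-i+1)`. -/
noncomputable def ff (a : ℝ) (i : ℕ) : ℝ := ∏ t ∈ Finset.range i, (a - t)

/-- Coefficients in the expansion of `D^j (x^a y^b)`. -/
noncomputable def cf (a b : ℝ) (j i : ℕ) : ℝ :=
  (-1 : ℝ) ^ (j - i) * (j.choose i : ℝ) * ff a i * ff b (j - i)

lemma ff_succ (a : ℝ) (i : ℕ) : ff a (i + 1) = ff a i * (a - i) :=
  Finset.prod_range_succ _ _

lemma cf_choose_zero (a b : ℝ) (j : ℕ) : cf a b j (j + 1) = 0 := by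
  simp [cf, Nat.choose_succ_self]

lemma sumP (a b x y : ℝ) (j : ℕ) :
    ∑ i ∈ range (j + 1), cf a b j i *
      ((a - i) * x ^ (a - i - 1) * y ^ (b - ((j - i : ℕ) : ℝ)) -
       (b - ((j - i : ℕ) : ℝ)) * x ^ (a - i) * y ^ (b - ((j - i : ℕ) : ℝ) - 1)) =
    ∑ i ∈ range (j + 2), cf a b (j + 1) i * x ^ (a - i) * y ^ (b - ((j + 1 - i : ℕ) : ℝ)) := by
  set A : ℕ → ℝ := fun i =>
    cf a b j i * ((a - i) * x ^ (a - i - 1) * y ^ (b - ((j - i : ℕ) : ℝ))) with hA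
  set B : ℕ → ℝ := fun i =>
    cf a b j i * ((b - ((j - i : ℕ) : ℝ)) * x ^ (a - i) * y ^ (b - ((j - i : ℕ) : ℝ) - 1)) with hB
  set g : ℕ → ℝ := fun i =>
    cf a b (j + 1) i * x ^ (a - i) * y ^ (b - ((j + 1 - i : ℕ) : ℝ)) with hg
  have h0 : g 0 = - B 0 := by
    simp only [hg, hB, cf, Nat.sub_zero, Nat.choose_zero_right, Nat.cast_zero, Nat.cast_one,
      ff_succ, pow_succ]
    rw [show b - ((j + 1 : ℕ) : ℝ) = b - (j : ℕ) - 1 by push_cast; ring]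
    ring
  have hterm : ∀ i ∈ range (j + 1), A i - B (i + 1) = g (i + 1) := by
    intro i hi
    have hij : i ≤ j := Nat.lt_succ_iff.mp (mem_range.mp hi)
    obtain ⟨d, rfl⟩ := Nat.exists_eq_add_of_le hij
    cases d with
    | zero =>
      have hB1 : B (i + 1) = 0 := by simp [hB, cf_choose_zero]
      rw [hB1, sub_zero]
      simp only [hA, hg, cf, Nat.add_zero, Nat.sub_self, Nat.choose_self, Nat.cast_one,
        Nat.cast_zero, pow_zero, Nat.add_sub_cancel_left]
      rw [show a - ((i + 1 : ℕ) : ℝ) = a - (i : ℕ) - 1 by push_cast; ring]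
      rw [ff_succ]
      simp only [ff, Finset.range_zero, Finset.prod_empty]
      ring
    | succ e =>
      have e1 : i + (e + 1) - i = e + 1 := by omega
      have e2 : i + (e + 1) - (i + 1) = e := by omega
      have e3 : i + (e + 1) + 1 - (i + 1) = e + 1 := by omega
      simp only [hA, hB, hg, cf, e1, e2, e3]
      have hch : ((i + (e + 1) + 1).choose (i + 1) : ℝ)
          = ((i + (e + 1)).choose i : ℝ) + ((i + (e + 1)).choose (i + 1) : ℝ) := by
        rw [← Nat.cast_add, ← Nat.choose_succ_succ]
      rw [hch]
      rw [show a - ((i + 1 : ℕ) : ℝ) = a - (i : ℕ) - 1 by push_cast; ring,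
        show b - ((e + 1 : ℕ) : ℝ) = b - (e : ℕ) - 1 by push_cast; ring]
      simp only [ff_succ, pow_succ]
      ring
  calc ∑ i ∈ range (j + 1), cf a b j i *
      ((a - i) * x ^ (a - i - 1) * y ^ (b - ((j - i : ℕ) : ℝ)) -
       (b - ((j - i : ℕ) : ℝ)) * x ^ (a - i) * y ^ (b - ((j - i : ℕ) : ℝ) - 1))
      = ∑ i ∈ range (j + 1), (A i - B i) := by
        refine Finset.sum_congr rfl fun i _ => ?_
        simp only [hA, hB]; ring
    _ = ∑ i ∈ range (j + 1), A i - ∑ i ∈ range (j + 1), B i := Finset.sum_sub_distrib _ _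
    _ = ∑ i ∈ range (j + 1), A i - ∑ i ∈ range (j + 2), B i := by
        rw [Finset.sum_range_succ (f := B) (n := j + 1)]
        have : B (j + 1) = 0 := by simp [hB, cf_choose_zero]
        rw [this, add_zero]
    _ = ∑ i ∈ range (j + 1), A i - (∑ i ∈ range (j + 1), B (i + 1) + B 0) :=
        by rw [Finset.sum_range_succ' B (j + 1)]
    _ = ∑ i ∈ range (j + 1), (A i - B (i + 1)) + - B 0 := by
        rw [Finset.sum_sub_distrib]; ring
    _ = ∑ i ∈ range (j + 1), g (i + 1) + g 0 := by
        rw [Finset.sum_congr rfl hterm, h0]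
    _ = ∑ i ∈ range (j + 2), g i := (Finset.sum_range_succ' g (j + 1)).symm

/-- The explicit expansion of `Dop^[j]` applied to `x^a y^b`. -/
noncomputable def S (a b : ℝ) (j : ℕ) (x y : ℝ) : ℝ :=
  ∑ i ∈ range (j + 1), cf a b j i * x ^ (a - i) * y ^ (b - ((j - i : ℕ) : ℝ))

lemma hasDerivAt_S_x (a b : ℝ) (j : ℕ) {x : ℝ} (y : ℝ) (hx : 0 < x) :
    HasDerivAt (fun x' => S a b j x' y)
      (∑ i ∈ range (j + 1),
        cf a b j i * ((a - i) * x ^ (a - i - 1)) * y ^ (b - ((j - i : ℕ) : ℝ))) x := by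
  apply HasDerivAt.fun_sum
  intro i _
  exact ((Real.hasDerivAt_rpow_const (p := a - i) (Or.inl hx.ne')).const_mul
    (cf a b j i)).mul_const _

lemma hasDerivAt_S_y (a b : ℝ) (j : ℕ) (x : ℝ) {y : ℝ} (hy : 0 < y) :
    HasDerivAt (fun y' => S a b j x y')
      (∑ i ∈ range (j + 1),
        cf a b j i * x ^ (a - i) *
          ((b - ((j - i : ℕ) : ℝ)) * y ^ (b - ((j - i : ℕ) : ℝ) - 1))) y := by
  apply HasDerivAt.fun_sum
  intro i _
  exact (Real.hasDerivAt_rpow_const (p := b - ((j - i : ℕ) : ℝ)) (Or.inl hy.ne')).const_mul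
    (cf a b j i * x ^ (a - i))

lemma Dop_iter (a b : ℝ) (j : ℕ) :
    ∀ x y : ℝ, 0 < x → 0 < y →
      (Dop^[j] (fun x' y' => x' ^ a * y' ^ b)) x y = S a b j x y := by
  induction j with
  | zero =>
    intro x y _ _
    simp [S, cf, ff]
  | succ j ih =>
    intro x y hx hy
    rw [Function.iterate_succ_apply', Dop]
    have hx' : deriv (fun x' => (Dop^[j] (fun x' y' => x' ^ a * y' ^ b)) x' y) x
        = deriv (fun x' => S a b j x' y) x := by
      apply Filter.EventuallyEq.deriv_eq
      filter_upwards [Ioi_mem_nhds hx] with t ht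
      exact ih t y ht hy
    have hy' : deriv (fun y' => (Dop^[j] (fun x' y' => x' ^ a * y' ^ b)) x y') y
        = deriv (fun y' => S a b j x y') y := by
      apply Filter.EventuallyEq.deriv_eq
      filter_upwards [Ioi_mem_nhds hy] with t ht
      exact ih x t hx ht
    rw [hx', hy', (hasDerivAt_S_x a b j y hx).deriv, (hasDerivAt_S_y a b j x hy).deriv]
    rw [← Finset.sum_sub_distrib]
    have := sumP a b x y j
    rw [show S a b (j+1) x y = ∑ i ∈ range (j + 2), cf a b (j + 1) i * x ^ (a - i) *
      y ^ (b - ((j + 1 - i : ℕ) : ℝ)) from rfl, ← this]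
    refine Finset.sum_congr rfl fun i _ => ?_
    ring

/-- `G_j(v) = (D^j f)((1-v)/2, (1+v)/2)`. -/
noncomputable def Gf (a b : ℝ) (j : ℕ) (v : ℝ) : ℝ :=
  S a b j ((1 - v) / 2) ((1 + v) / 2)

lemma hasDerivAt_Gf (a b : ℝ) (j : ℕ) {v : ℝ} (hv : v ∈ Set.Ioo (-1 : ℝ) 1) :
    HasDerivAt (Gf a b j) (-(1 / 2) * Gf a b (j + 1) v) v := by
  have hx : (0 : ℝ) < (1 - v) / 2 := by linarith [hv.2]
  have hy : (0 : ℝ) < (1 + v) / 2 := by linarith [hv.1]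
  have hX : HasDerivAt (fun v' : ℝ => (1 - v') / 2) (-(1 / 2) : ℝ) v := by
    exact (((hasDerivAt_id' v).const_sub 1).div_const (2:ℝ)).congr_deriv (by norm_num)
  have hY : HasDerivAt (fun v' : ℝ => (1 + v') / 2) ((1 : ℝ) / 2) v := by
    exact (((hasDerivAt_id' v).const_add 1).div_const (2:ℝ))
  have hterm : ∀ i ∈ range (j + 1), HasDerivAt
      (fun v' => cf a b j i * ((1 - v') / 2) ^ (a - i) * ((1 + v') / 2) ^ (b - ((j - i : ℕ) : ℝ)))
      (cf a b j i * (-(1 / 2) * (a - i) * ((1 - v) / 2) ^ (a - i - 1)) *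
          ((1 + v) / 2) ^ (b - ((j - i : ℕ) : ℝ)) +
        cf a b j i * ((1 - v) / 2) ^ (a - i) *
          (1 / 2 * (b - ((j - i : ℕ) : ℝ)) * ((1 + v) / 2) ^ (b - ((j - i : ℕ) : ℝ) - 1))) v :=
    fun i _ => ((hX.rpow_const (Or.inl hx.ne')).const_mul (cf a b j i)).mul
      (hY.rpow_const (Or.inl hy.ne'))
  have hsum := HasDerivAt.fun_sum hterm
  have heq : ∑ i ∈ range (j + 1),
      (cf a b j i * (-(1 / 2) * (a - i) * ((1 - v) / 2) ^ (a - i - 1)) *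
          ((1 + v) / 2) ^ (b - ((j - i : ℕ) : ℝ)) +
        cf a b j i * ((1 - v) / 2) ^ (a - i) *
          (1 / 2 * (b - ((j - i : ℕ) : ℝ)) * ((1 + v) / 2) ^ (b - ((j - i : ℕ) : ℝ) - 1)))
      = -(1 / 2) * Gf a b (j + 1) v := by
    rw [show Gf a b (j + 1) v = ∑ i ∈ range (j + 2), cf a b (j + 1) i * ((1 - v) / 2) ^ (a - i) *
        ((1 + v) / 2) ^ (b - ((j + 1 - i : ℕ) : ℝ)) from rfl]
    rw [← sumP a b ((1 - v) / 2) ((1 + v) / 2) j, Finset.mul_sum]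
    refine Finset.sum_congr rfl fun i _ => ?_
    ring
  rw [heq] at hsum
  exact hsum

lemma Gf_tendsto (a b : ℝ) (j : ℕ) (w : ℝ) (hw : w = 1 ∨ w = -1)
    (hpa : ∀ i ∈ range (j + 1), 0 < a - i)
    (hpb : ∀ i ∈ range (j + 1), 0 < b - ((j - i : ℕ) : ℝ)) :
    Filter.Tendsto (Gf a b j) (nhds w) (nhds 0) := by
  have hcont : ∀ i ∈ range (j + 1), ContinuousAt
      (fun v => cf a b j i * ((1 - v) / 2) ^ (a - i) *
        ((1 + v) / 2) ^ (b - ((j - i : ℕ) : ℝ))) w := by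
    intro i hi
    have hXc : ContinuousAt (fun v : ℝ => ((1 - v) / 2) ^ (a - i)) w := by
      apply ContinuousAt.comp (g := fun t : ℝ => t ^ (a - i))
      · exact Real.continuousAt_rpow_const _ _ (Or.inr (hpa i hi).le)
      · fun_prop
    have hYc : ContinuousAt (fun v : ℝ => ((1 + v) / 2) ^ (b - ((j - i : ℕ) : ℝ))) w := by
      apply ContinuousAt.comp (g := fun t : ℝ => t ^ (b - ((j - i : ℕ) : ℝ)))
      · exact Real.continuousAt_rpow_const _ _ (Or.inr (hpb i hi).le)
      · fun_prop
    exact (hXc.const_mul _).mul hYc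
  have hval : ∀ i ∈ range (j + 1),
      cf a b j i * ((1 - w) / 2) ^ (a - i) * ((1 + w) / 2) ^ (b - ((j - i : ℕ) : ℝ)) = 0 := by
    intro i hi
    rcases hw with h | h
    · rw [h, show ((1:ℝ) - 1) / 2 = 0 by norm_num, Real.zero_rpow (hpa i hi).ne']
      ring
    · rw [h, show ((1:ℝ) + -1) / 2 = 0 by norm_num, Real.zero_rpow (hpb i hi).ne']
      ring
  have h0 : Gf a b j w = 0 := Finset.sum_eq_zero hval
  have := tendsto_finset_sum (range (j + 1)) (fun i hi => (hcont i hi).tendsto)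
  rw [show ∑ i ∈ range (j + 1),
      cf a b j i * ((1 - w) / 2) ^ (a - i) * ((1 + w) / 2) ^ (b - ((j - i : ℕ) : ℝ)) = 0
    from h0] at this
  exact this

lemma intOn_aux (p q : ℝ) (hp : -1 < p) (hq : -1 < q) {Q : ℝ → ℝ} (hQ : Continuous Q) :
    IntegrableOn (fun v => Q v * ((1 - v) / 2) ^ p * ((1 + v) / 2) ^ q)
      (Set.Ioo (-1 : ℝ) 1) := by
  have hsplit : Set.Ioo (-1 : ℝ) 1 = Set.Ioc (-1 : ℝ) 0 ∪ Set.Ioo (0 : ℝ) 1 := by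
    ext z
    simp only [Set.mem_Ioo, Set.mem_Ioc, Set.mem_union]
    constructor
    · rintro ⟨h1, h2⟩
      rcases le_or_gt z 0 with h | h
      · exact Or.inl ⟨h1, h⟩
      · exact Or.inr ⟨h, h2⟩
    · rintro (⟨h1, h2⟩ | ⟨h1, h2⟩) <;> constructor <;> linarith
  rw [hsplit]
  apply IntegrableOn.union
  · -- on (-1, 0]
    have hY : IntegrableOn (fun v : ℝ => ((1 + v) / 2) ^ q) (Set.Ioc (-1 : ℝ) 0) := by
      have base : IntervalIntegrable (fun x : ℝ => x ^ q) volume 0 1 :=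
        intervalIntegral.intervalIntegrable_rpow' hq
      have h1 : IntervalIntegrable (fun x : ℝ => (x * (1 / 2)) ^ q) volume 0 2 := by
        have := base.comp_mul_right (c := 1 / 2)
        norm_num at this
        exact this
      have h2 : IntervalIntegrable (fun v : ℝ => ((1 + v) * (1 / 2)) ^ q) volume (-1) 1 := by
        have := h1.comp_add_left 1
        norm_num at this
        exact this
      have h3 : IntervalIntegrable (fun v : ℝ => ((1 + v) / 2) ^ q) volume (-1) 1 := by
        simpa [div_eq_mul_inv, one_div] using h2
      have h4 : IntegrableOn (fun v : ℝ => ((1 + v) / 2) ^ q) (Set.Ioc (-1 : ℝ) 1) := by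
        rw [← intervalIntegrable_iff_integrableOn_Ioc_of_le (by norm_num : (-1 : ℝ) ≤ 1)]
        exact h3
      exact h4.mono_set (Set.Ioc_subset_Ioc_right (by norm_num))
    have hg : ContinuousOn (fun v => Q v * ((1 - v) / 2) ^ p) (Set.Icc (-1 : ℝ) 0) := by
      apply hQ.continuousOn.mul
      apply ContinuousOn.rpow_const
      · fun_prop
      · intro v hv
        left
        have : (0:ℝ) < (1 - v) / 2 := by
          simp only [Set.mem_Icc] at hv
          linarith [hv.2]
        exact this.ne'
    obtain ⟨C, hC⟩ := isCompact_Icc.exists_bound_of_continuousOn hg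
    apply Integrable.bdd_mul (c := C) hY
    · exact (hg.mono Set.Ioc_subset_Icc_self).aestronglyMeasurable measurableSet_Ioc
    · exact ae_restrict_of_forall_mem measurableSet_Ioc
        fun v hv => hC v (Set.Ioc_subset_Icc_self hv)
  · -- on (0, 1)
    have hY : IntegrableOn (fun v : ℝ => ((1 - v) / 2) ^ p) (Set.Ioo (0 : ℝ) 1) := by
      have base : IntervalIntegrable (fun x : ℝ => x ^ p) volume 0 1 :=
        intervalIntegral.intervalIntegrable_rpow' hp
      have h1 : IntervalIntegrable (fun x : ℝ => (x * (1 / 2)) ^ p) volume 0 2 := by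
        have := base.comp_mul_right (c := 1 / 2)
        norm_num at this
        exact this
      have h2 : IntervalIntegrable (fun v : ℝ => ((1 - v) * (1 / 2)) ^ p) volume (-1) 1 := by
        have := (h1.comp_sub_left 1).symm
        norm_num at this
        exact this
      have h3 : IntervalIntegrable (fun v : ℝ => ((1 - v) / 2) ^ p) volume (-1) 1 := by
        simpa [div_eq_mul_inv, one_div] using h2
      have h4 : IntegrableOn (fun v : ℝ => ((1 - v) / 2) ^ p) (Set.Ioc (-1 : ℝ) 1) := by
        rw [← intervalIntegrable_iff_integrableOn_Ioc_of_le (by norm_num : (-1 : ℝ) ≤ 1)]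
        exact h3
      exact (h4.mono_set (Set.Ioo_subset_Ioc_self.trans (Set.Ioc_subset_Ioc_left (by norm_num))))
    have hg : ContinuousOn (fun v => Q v * ((1 + v) / 2) ^ q) (Set.Icc (0 : ℝ) 1) := by
      apply hQ.continuousOn.mul
      apply ContinuousOn.rpow_const
      · fun_prop
      · intro v hv
        left
        have : (0:ℝ) < (1 + v) / 2 := by
          simp only [Set.mem_Icc] at hv
          linarith [hv.1]
        exact this.ne'
    obtain ⟨C, hC⟩ := isCompact_Icc.exists_bound_of_continuousOn hg
    have key : IntegrableOn (fun v => (Q v * ((1 + v) / 2) ^ q) * ((1 - v) / 2) ^ p)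
        (Set.Ioo (0 : ℝ) 1) := by
      apply Integrable.bdd_mul (c := C) hY
      · exact (hg.mono (fun z hz => ⟨hz.1.le, hz.2.le⟩)).aestronglyMeasurable measurableSet_Ioo
      · exact ae_restrict_of_forall_mem measurableSet_Ioo
          fun v hv => hC v ⟨hv.1.le, hv.2.le⟩
    apply key.congr_fun _ measurableSet_Ioo
    intro v _
    ring

lemma ibp_Ioo {u u' w w' : ℝ → ℝ}
    (hu : ∀ v ∈ Set.Ioo (-1 : ℝ) 1, HasDerivAt u (u' v) v)
    (hw : ∀ v ∈ Set.Ioo (-1 : ℝ) 1, HasDerivAt w (w' v) v)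
    (h1 : IntegrableOn (fun v => u' v * w v) (Set.Ioo (-1 : ℝ) 1))
    (h2 : IntegrableOn (fun v => u v * w' v) (Set.Ioo (-1 : ℝ) 1))
    (hb1 : Tendsto (fun v => u v * w v) (nhdsWithin (-1 : ℝ) (Set.Ioi (-1))) (nhds 0))
    (hb2 : Tendsto (fun v => u v * w v) (nhdsWithin (1 : ℝ) (Set.Iio 1)) (nhds 0)) :
    ∫ v in Set.Ioo (-1 : ℝ) 1, u' v * w v = - ∫ v in Set.Ioo (-1 : ℝ) 1, u v * w' v := by
  set e : ℕ → ℝ := fun j => ((j : ℝ) + 2)⁻¹ with he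
  have he0 : ∀ j, 0 < e j := fun j => by positivity
  have he1 : ∀ j, e j ≤ 2⁻¹ := by
    intro j
    apply inv_anti₀ (by norm_num)
    have : (0:ℝ) ≤ (j:ℝ) := Nat.cast_nonneg j
    linarith
  have hetend : Tendsto e atTop (nhds 0) := by
    apply Tendsto.inv_tendsto_atTop
    apply tendsto_atTop_add_const_right
    exact tendsto_natCast_atTop_atTop
  set aj : ℕ → ℝ := fun j => -1 + e j with haj
  set bj : ℕ → ℝ := fun j => 1 - e j with hbj
  have ha : Tendsto aj atTop (nhds (-1)) := by
    have := (tendsto_const_nhds (x := (-1:ℝ)) (f := atTop (α := ℕ))).add hetend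
    simpa using this
  have hb : Tendsto bj atTop (nhds 1) := by
    have := (tendsto_const_nhds (x := (1:ℝ)) (f := atTop (α := ℕ))).sub hetend
    simpa using this
  have hab : ∀ j, aj j ≤ bj j := by
    intro j
    have := he1 j
    simp only [haj, hbj]
    linarith
  have hsub : ∀ j, Set.Icc (aj j) (bj j) ⊆ Set.Ioo (-1 : ℝ) 1 := by
    intro j z hz
    have h0 := he0 j
    constructor
    · have := hz.1; simp only [haj] at this; linarith
    · have := hz.2; simp only [hbj] at this; linarith
  have hsub' : ∀ j, Set.Ioc (aj j) (bj j) ⊆ Set.Ioo (-1 : ℝ) 1 :=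
    fun j => (Set.Ioc_subset_Icc_self).trans (hsub j)
  set h : ℝ → ℝ := fun v => u' v * w v + u v * w' v with hh
  have hint : IntegrableOn h (Set.Ioo (-1 : ℝ) 1) := h1.add h2
  have cover : AECover (volume.restrict (Set.Ioo (-1 : ℝ) 1)) atTop
      (fun j => Set.Ioc (aj j) (bj j)) := aecover_Ioo_of_Ioc ha hb
  have key := cover.integral_tendsto_of_countably_generated hint
  have step : ∀ j, ∫ v in Set.Ioc (aj j) (bj j), h v ∂(volume.restrict (Set.Ioo (-1 : ℝ) 1))
      = u (bj j) * w (bj j) - u (aj j) * w (aj j) := by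
    intro j
    rw [Measure.restrict_restrict measurableSet_Ioc,
      Set.inter_eq_self_of_subset_left (hsub' j)]
    have hder : ∀ t ∈ Set.uIcc (aj j) (bj j), HasDerivAt (fun v => u v * w v) (h t) t := by
      intro t ht
      rw [Set.uIcc_of_le (hab j)] at ht
      exact (hu t (hsub j ht)).mul (hw t (hsub j ht))
    have hint' : IntervalIntegrable h volume (aj j) (bj j) := by
      rw [intervalIntegrable_iff_integrableOn_Ioc_of_le (hab j)]
      exact hint.mono_set (hsub' j)
    have := intervalIntegral.integral_eq_sub_of_hasDerivAt hder hint'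
    rw [intervalIntegral.integral_of_le (hab j)] at this
    exact this
  have haj' : Tendsto aj atTop (nhdsWithin (-1 : ℝ) (Set.Ioi (-1))) := by
    apply tendsto_nhdsWithin_of_tendsto_nhds_of_eventually_within _ ha
    filter_upwards with j
    exact lt_add_of_pos_right _ (he0 j)
  have hbj' : Tendsto bj atTop (nhdsWithin (1 : ℝ) (Set.Iio 1)) := by
    apply tendsto_nhdsWithin_of_tendsto_nhds_of_eventually_within _ hb
    filter_upwards with j
    exact sub_lt_self _ (he0 j)
  have blim : Tendsto (fun j => u (bj j) * w (bj j) - u (aj j) * w (aj j)) atTop (nhds 0) := by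
    have := (hb2.comp hbj').sub (hb1.comp haj')
    simpa using this
  have htot : ∫ v in Set.Ioo (-1 : ℝ) 1, h v = 0 := by
    apply tendsto_nhds_unique _ blim
    convert key using 2 with j
    exact (step j).symm
  rw [hh] at htot
  rw [integral_add h1 h2] at htot
  linarith

lemma intOn_QGf {a b : ℝ} {j : ℕ}
    (hpa : ∀ i ∈ range (j + 1), (-1:ℝ) < a - i)
    (hpb : ∀ i ∈ range (j + 1), (-1:ℝ) < b - ((j - i : ℕ) : ℝ))
    {Q : ℝ → ℝ} (hQ : Continuous Q) :
    IntegrableOn (fun v => Q v * Gf a b j v) (Set.Ioo (-1 : ℝ) 1) := by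
  have heq : (fun v => Q v * Gf a b j v)
      = fun v => ∑ i ∈ range (j + 1), cf a b j i *
          (Q v * ((1 - v) / 2) ^ (a - i) * ((1 + v) / 2) ^ (b - ((j - i : ℕ) : ℝ))) := by
    funext v
    rw [show Gf a b j v = ∑ i ∈ range (j + 1), cf a b j i * ((1 - v) / 2) ^ (a - i) *
        ((1 + v) / 2) ^ (b - ((j - i : ℕ) : ℝ)) from rfl, Finset.mul_sum]
    exact Finset.sum_congr rfl fun i _ => by ring
  rw [heq]
  apply integrable_finset_sum
  intro i hi
  exact (intOn_aux _ _ (hpa i hi) (hpb i hi) hQ).const_mul _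

lemma chain (a b : ℝ) (k : ℕ)
    (hpa : ∀ d : ℕ, d ≤ k → (-1:ℝ) < a - d) (hpb : ∀ d : ℕ, d ≤ k → (-1:ℝ) < b - d)
    (hpa' : ∀ d : ℕ, d < k → (0:ℝ) < a - d) (hpb' : ∀ d : ℕ, d < k → (0:ℝ) < b - d) :
    ∀ j, j ≤ k → ∀ Q : Polynomial ℝ,
      ∫ v in Set.Ioo (-1:ℝ) 1, Q.eval v * Gf a b j v
        = 2 ^ j * ∫ v in Set.Ioo (-1:ℝ) 1, (Polynomial.derivative^[j] Q).eval v * Gf a b 0 v := by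
  intro j
  induction j with
  | zero => intro _ Q; simp
  | succ j ih =>
    intro hjk Q
    have hj : j ≤ k := by omega
    have h1 : IntegrableOn (fun v => Q.derivative.eval v * Gf a b j v)
        (Set.Ioo (-1 : ℝ) 1) := by
      apply intOn_QGf _ _ Q.derivative.continuous
      · intro i hi; exact hpa i (by have := mem_range.mp hi; omega)
      · intro i _; exact hpb (j - i) (by omega)
    have h1' : IntegrableOn (fun v => Q.eval v * Gf a b (j + 1) v)
        (Set.Ioo (-1 : ℝ) 1) := by
      apply intOn_QGf _ _ Q.continuous
      · intro i hi; exact hpa i (by have := mem_range.mp hi; omega)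
      · intro i _; exact hpb (j + 1 - i) (by omega)
    have h2 : IntegrableOn (fun v => Q.eval v * (-(1/2) * Gf a b (j + 1) v))
        (Set.Ioo (-1 : ℝ) 1) := by
      have h2' : IntegrableOn (fun v => -(1/2) * (Q.eval v * Gf a b (j + 1) v))
          (Set.Ioo (-1 : ℝ) 1) := h1'.const_mul _
      apply h2'.congr_fun _ measurableSet_Ioo
      intro v _
      ring
    have hbt : ∀ w : ℝ, w = 1 ∨ w = -1 → Tendsto (fun v => Q.eval v * Gf a b j v)
        (nhds w) (nhds 0) := by
      intro w hw
      have hg : Tendsto (Gf a b j) (nhds w) (nhds 0) := by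
        apply Gf_tendsto a b j w hw
        · intro i hi; exact hpa' i (by have := mem_range.mp hi; omega)
        · intro i hi
          apply hpb' (j - i) (by omega)
      have := (Q.continuous.tendsto w).mul hg
      rw [mul_zero] at this
      exact this
    have ibp := ibp_Ioo (u := fun v => Q.eval v) (u' := fun v => Q.derivative.eval v)
      (w := Gf a b j) (w' := fun v => -(1/2) * Gf a b (j + 1) v)
      (fun v _ => Q.hasDerivAt v) (fun v hv => hasDerivAt_Gf a b j hv)
      h1 h2 ((hbt (-1) (Or.inr rfl)).mono_left nhdsWithin_le_nhds)
      ((hbt 1 (Or.inl rfl)).mono_left nhdsWithin_le_nhds)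
    have hpull : ∫ v in Set.Ioo (-1:ℝ) 1, Q.eval v * (-(1/2) * Gf a b (j + 1) v)
        = -(1/2) * ∫ v in Set.Ioo (-1:ℝ) 1, Q.eval v * Gf a b (j + 1) v := by
      rw [← integral_const_mul]
      apply setIntegral_congr_fun measurableSet_Ioo
      intro v _
      ring
    rw [hpull] at ibp
    have hstep : ∫ v in Set.Ioo (-1:ℝ) 1, Q.eval v * Gf a b (j + 1) v
        = 2 * ∫ v in Set.Ioo (-1:ℝ) 1, Q.derivative.eval v * Gf a b j v := by
      rw [ibp]; ring
    rw [hstep, ih hj Q.derivative, ← Function.iterate_succ_apply]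
    ring

lemma aux_orth (l m : ℝ) (hl : -1 < l) (hm : -1 < m) (k n : ℕ) (hnk : n < k) :
    ∫ v in Set.Ioo (-1:ℝ) 1,
      CRC l m k v * CRC l m n v * (1 - v) ^ l * (1 + v) ^ m = 0 := by
  set P : Polynomial ℝ := ∑ i ∈ range (n + 1),
    Polynomial.C (cf (l + (n:ℝ)) (m + (n:ℝ)) n i) *
      (Polynomial.C (2:ℝ)⁻¹ * (1 - Polynomial.X)) ^ (n - i) *
      (Polynomial.C (2:ℝ)⁻¹ * (1 + Polynomial.X)) ^ i with hP
  have hA1 : (Polynomial.C (2:ℝ)⁻¹ * (1 - Polynomial.X)).natDegree ≤ 1 := by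
    refine le_trans Polynomial.natDegree_mul_le ?_
    rw [Polynomial.natDegree_C]
    have := Polynomial.natDegree_sub_le (1 : Polynomial ℝ) Polynomial.X
    simp only [Polynomial.natDegree_one, Polynomial.natDegree_X] at this
    omega
  have hB1 : (Polynomial.C (2:ℝ)⁻¹ * (1 + Polynomial.X)).natDegree ≤ 1 := by
    refine le_trans Polynomial.natDegree_mul_le ?_
    rw [Polynomial.natDegree_C]
    have := Polynomial.natDegree_add_le (1 : Polynomial ℝ) Polynomial.X
    simp only [Polynomial.natDegree_one, Polynomial.natDegree_X] at this
    omega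
  have hdeg : P.natDegree < k := by
    have hn : P.natDegree ≤ n := by
      apply Polynomial.natDegree_sum_le_of_forall_le
      intro i hi
      have hi' : i ≤ n := Nat.lt_succ_iff.mp (mem_range.mp hi)
      refine le_trans Polynomial.natDegree_mul_le ?_
      have t1 : (Polynomial.C (cf (l + (n:ℝ)) (m + (n:ℝ)) n i) *
          (Polynomial.C (2:ℝ)⁻¹ * (1 - Polynomial.X)) ^ (n - i)).natDegree ≤ n - i := by
        refine le_trans Polynomial.natDegree_mul_le ?_
        rw [Polynomial.natDegree_C]
        have := Polynomial.natDegree_pow_le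
          (p := Polynomial.C (2:ℝ)⁻¹ * (1 - Polynomial.X)) (n := n - i)
        have h2 : (n - i) * (Polynomial.C (2:ℝ)⁻¹ * (1 - Polynomial.X)).natDegree ≤ n - i := by
          calc (n - i) * (Polynomial.C (2:ℝ)⁻¹ * (1 - Polynomial.X)).natDegree
              ≤ (n - i) * 1 := Nat.mul_le_mul_left _ hA1
            _ = n - i := Nat.mul_one _
        omega
      have t2 : ((Polynomial.C (2:ℝ)⁻¹ * (1 + Polynomial.X)) ^ i).natDegree ≤ i := by
        have := Polynomial.natDegree_pow_le
          (p := Polynomial.C (2:ℝ)⁻¹ * (1 + Polynomial.X)) (n := i)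
        have h2 : i * (Polynomial.C (2:ℝ)⁻¹ * (1 + Polynomial.X)).natDegree ≤ i := by
          calc i * (Polynomial.C (2:ℝ)⁻¹ * (1 + Polynomial.X)).natDegree
              ≤ i * 1 := Nat.mul_le_mul_left _ hB1
            _ = i := Nat.mul_one _
        omega
      omega
    omega
  have hPeval : ∀ v ∈ Set.Ioo (-1:ℝ) 1, CRC l m n v = P.eval v := by
    intro v hv
    have hx : (0:ℝ) < (1 - v) / 2 := by linarith [hv.2]
    have hy : (0:ℝ) < (1 + v) / 2 := by linarith [hv.1]
    rw [CRC, cRC, Dop_iter (l + (n:ℝ)) (m + (n:ℝ)) n _ _ hx hy]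
    rw [show S (l + (n:ℝ)) (m + (n:ℝ)) n ((1 - v) / 2) ((1 + v) / 2)
        = ∑ i ∈ range (n + 1), cf (l + (n:ℝ)) (m + (n:ℝ)) n i *
          ((1 - v) / 2) ^ ((l + (n:ℝ)) - i) *
          ((1 + v) / 2) ^ ((m + (n:ℝ)) - ((n - i : ℕ) : ℝ)) from rfl]
    rw [hP, Polynomial.eval_finset_sum, Finset.mul_sum]
    refine Finset.sum_congr rfl fun i hi => ?_
    have hi' : i ≤ n := Nat.lt_succ_iff.mp (mem_range.mp hi)
    have hxe : ((1 - v) / 2) ^ (-l) * ((1 - v) / 2) ^ ((l + (n:ℝ)) - i)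
        = ((1 - v) / 2) ^ ((n - i : ℕ)) := by
      rw [← Real.rpow_natCast ((1 - v) / 2) (n - i), ← Real.rpow_add hx]
      congr 1
      rw [Nat.cast_sub hi']
      ring
    have hye : ((1 + v) / 2) ^ (-m) * ((1 + v) / 2) ^ ((m + (n:ℝ)) - ((n - i : ℕ) : ℝ))
        = ((1 + v) / 2) ^ (i : ℕ) := by
      rw [← Real.rpow_natCast ((1 + v) / 2) i, ← Real.rpow_add hy]
      congr 1
      rw [Nat.cast_sub hi']
      ring
    calc ((1 - v) / 2) ^ (-l) * ((1 + v) / 2) ^ (-m) *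
          (cf (l + (n:ℝ)) (m + (n:ℝ)) n i * ((1 - v) / 2) ^ ((l + (n:ℝ)) - i) *
            ((1 + v) / 2) ^ ((m + (n:ℝ)) - ((n - i : ℕ) : ℝ)))
        = cf (l + (n:ℝ)) (m + (n:ℝ)) n i *
            (((1 - v) / 2) ^ (-l) * ((1 - v) / 2) ^ ((l + (n:ℝ)) - i)) *
            (((1 + v) / 2) ^ (-m) * ((1 + v) / 2) ^ ((m + (n:ℝ)) - ((n - i : ℕ) : ℝ))) := by
          ring
      _ = cf (l + (n:ℝ)) (m + (n:ℝ)) n i * ((1 - v) / 2) ^ ((n - i : ℕ)) *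
            ((1 + v) / 2) ^ (i : ℕ) := by rw [hxe, hye]
      _ = Polynomial.eval v (Polynomial.C (cf (l + (n:ℝ)) (m + (n:ℝ)) n i) *
            (Polynomial.C (2:ℝ)⁻¹ * (1 - Polynomial.X)) ^ (n - i) *
            (Polynomial.C (2:ℝ)⁻¹ * (1 + Polynomial.X)) ^ i) := by
          simp only [Polynomial.eval_mul, Polynomial.eval_pow, Polynomial.eval_C,
            Polynomial.eval_add, Polynomial.eval_sub, Polynomial.eval_one, Polynomial.eval_X]
          ring_nf
  have hcong : ∀ v ∈ Set.Ioo (-1:ℝ) 1,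
      CRC l m k v * CRC l m n v * (1 - v) ^ l * (1 + v) ^ m
        = (2:ℝ) ^ l * ((2:ℝ) ^ m * (P.eval v * Gf (l + (k:ℝ)) (m + (k:ℝ)) k v)) := by
    intro v hv
    have hx : (0:ℝ) < (1 - v) / 2 := by linarith [hv.2]
    have hy : (0:ℝ) < (1 + v) / 2 := by linarith [hv.1]
    have hCk : CRC l m k v = ((1 - v) / 2) ^ (-l) * ((1 + v) / 2) ^ (-m) *
        Gf (l + (k:ℝ)) (m + (k:ℝ)) k v := by
      rw [CRC, cRC, Dop_iter (l + (k:ℝ)) (m + (k:ℝ)) k _ _ hx hy]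
      rfl
    have h1v : (1 - v) ^ l = 2 ^ l * ((1 - v) / 2) ^ l := by
      rw [← Real.mul_rpow (by norm_num : (0:ℝ) ≤ 2) hx.le,
        show (2:ℝ) * ((1 - v) / 2) = 1 - v by ring]
    have h2v : (1 + v) ^ m = 2 ^ m * ((1 + v) / 2) ^ m := by
      rw [← Real.mul_rpow (by norm_num : (0:ℝ) ≤ 2) hy.le,
        show (2:ℝ) * ((1 + v) / 2) = 1 + v by ring]
    have hx1 : ((1 - v) / 2) ^ (-l) * ((1 - v) / 2) ^ l = 1 := by
      rw [← Real.rpow_add hx]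
      simp
    have hy1 : ((1 + v) / 2) ^ (-m) * ((1 + v) / 2) ^ m = 1 := by
      rw [← Real.rpow_add hy]
      simp
    rw [hCk, hPeval v hv, h1v, h2v]
    calc ((1 - v) / 2) ^ (-l) * ((1 + v) / 2) ^ (-m) * Gf (l + (k:ℝ)) (m + (k:ℝ)) k v *
          P.eval v * (2 ^ l * ((1 - v) / 2) ^ l) * (2 ^ m * ((1 + v) / 2) ^ m)
        = (((1 - v) / 2) ^ (-l) * ((1 - v) / 2) ^ l) *
            ((((1 + v) / 2) ^ (-m) * ((1 + v) / 2) ^ m)) *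
            ((2:ℝ) ^ l * ((2:ℝ) ^ m * (P.eval v * Gf (l + (k:ℝ)) (m + (k:ℝ)) k v))) := by
          ring
      _ = (2:ℝ) ^ l * ((2:ℝ) ^ m * (P.eval v * Gf (l + (k:ℝ)) (m + (k:ℝ)) k v)) := by
          rw [hx1, hy1]; ring
  rw [setIntegral_congr_fun measurableSet_Ioo hcong, integral_const_mul, integral_const_mul]
  have hchain := chain (l + (k:ℝ)) (m + (k:ℝ)) k
    (fun d hd => by
      have : (d:ℝ) ≤ (k:ℝ) := Nat.cast_le.mpr hd
      linarith)
    (fun d hd => by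
      have : (d:ℝ) ≤ (k:ℝ) := Nat.cast_le.mpr hd
      linarith)
    (fun d hd => by
      have : (d:ℝ) + 1 ≤ (k:ℝ) := by exact_mod_cast Nat.succ_le_of_lt hd
      linarith)
    (fun d hd => by
      have : (d:ℝ) + 1 ≤ (k:ℝ) := by exact_mod_cast Nat.succ_le_of_lt hd
      linarith)
    k le_rfl P
  rw [hchain, Polynomial.iterate_derivative_eq_zero hdeg]
  simp

end CRCaux

/-- Orthogonality of the polynomials `C^{(k)}_{λ,μ}` for the weight `(1−v)^λ (1+v)^μ` on
`(−1,1)`. -/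
theorem CRC_orthogonal (l m : ℝ) (hl : -1 < l) (hm : -1 < m) (k n : ℕ) (hkn : k ≠ n) :
    ∫ v in Set.Ioo (-1:ℝ) 1,
      CRC l m k v * CRC l m n v * (1 - v) ^ l * (1 + v) ^ m = 0 := by
  rcases lt_or_gt_of_ne hkn with h | h
  · have h0 := CRCaux.aux_orth l m hl hm n k h
    rw [← h0]
    apply MeasureTheory.setIntegral_congr_fun measurableSet_Ioo
    intro v _
    ring
  · exact CRCaux.aux_orth l m hl hm k n h
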